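/- For the simple symmetric random walk, let U_{n,r} be the local time on edge r up to time n. Then for every integer n ≥ 1 and real L > 0, P[max over r in ℤ of U_{n,r} > L] ≤ 4n·e^(-L²/(2n)). -/

import Mathlib

open Finset

namespace SWalk

/-- step value of a Bool -/
def stp (b : Bool) : ℤ := if b then 1 else -1

lemma stp_not (b : Bool) : stp (!b) = - stp b := by cases b <;> simp [stp]

lemma stp_inj {a b : Bool} (h : stp a = stp b) : a = b := by
  cases a <;> cases b <;> simp [stp] at h ⊢

lemma stp_one_or (b : Bool) : stp b = 1 ∨ stp b = -1 := by cases b <;> simp [stp]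

/-- partial sums of a finite sign sequence -/
def ps (n : ℕ) (f : Fin n → Bool) (k : ℕ) : ℤ :=
  ∑ i ∈ Finset.range k, if h : i < n then stp (f ⟨i, h⟩) else 0

lemma ps_zero (n : ℕ) (f : Fin n → Bool) : ps n f 0 = 0 := by simp [ps]

lemma ps_succ (n : ℕ) (f : Fin n → Bool) (k : ℕ) :
    ps n f (k + 1) = ps n f k + (if h : k < n then stp (f ⟨k, h⟩) else 0) := by
  simp [ps, Finset.sum_range_succ]

lemma step_cases (n : ℕ) (f : Fin n → Bool) (k : ℕ) :
    ps n f (k+1) - ps n f k = 1 ∨ ps n f (k+1) - ps n f k = -1 ∨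
      ps n f (k+1) - ps n f k = 0 := by
  rw [ps_succ]
  by_cases h : k < n
  · rcases stp_one_or (f ⟨k, h⟩) with h1 | h1 <;> simp [h, h1]
  · simp [h]

lemma ps_bounds (n : ℕ) (f : Fin n → Bool) (k : ℕ) :
    ps n f k ≤ (min k n : ℤ) ∧ -(min k n : ℤ) ≤ ps n f k := by
  induction k with
  | zero => simp [ps_zero]
  | succ k ih =>
    have h := step_cases n f k
    have h2 : (min k n : ℤ) ≤ min (k+1) n ∧ (min (k+1) n : ℤ) ≤ (min k n : ℤ) + 1 ∧
        (k < n → (min (k+1) n : ℤ) = (min k n : ℤ) + 1) ∧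
        (¬ k < n → (min (k+1) n : ℤ) = (min k n : ℤ)) := by
      constructor
      · push_cast [Nat.cast_min]; omega
      refine ⟨?_, ?_, ?_⟩ <;> [skip; intro hk; intro hk] <;> · push_cast [Nat.cast_min]; omega
    have h3 : k < n ∨ ¬ k < n := em _
    have hstep : ps n f (k+1) - ps n f k = 0 → ¬ k < n → True := fun _ _ => trivial
    by_cases hk : k < n
    · have e := h2.2.2.1 hk
      omega
    · have e := h2.2.2.2 hk
      have : ps n f (k+1) = ps n f k := by rw [ps_succ]; simp [hk]
      omega

/-- number of crossings of edge `r` (between `r-1` and `r`) before time `k` -/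
def gg (n : ℕ) (f : Fin n → Bool) (r : ℤ) (k : ℕ) : ℕ :=
  ((Finset.range k).filter (fun j => ps n f j + ps n f (j+1) = 2*r - 1)).card

lemma gg_zero (n f r) : gg n f r 0 = 0 := by simp [gg]

lemma gg_succ (n f r k) :
    gg n f r (k+1) = gg n f r k + if ps n f k + ps n f (k+1) = 2*r - 1 then 1 else 0 := by
  simp only [gg, Finset.range_add_one, Finset.filter_insert]
  by_cases h : ps n f k + ps n f (k+1) = 2*r - 1 <;>
    simp [h, Finset.card_insert_of_notMem, Finset.notMem_range_self]

/-- the straightening map -/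
def Phi (n : ℕ) (r : ℤ) (f : Fin n → Bool) : Fin n → Bool :=
  fun i => if Even (gg n f r i.val) then f i else !(f i)

lemma step_Phi (n r f k) :
    ps n (Phi n r f) (k+1) - ps n (Phi n r f) k =
      (if Even (gg n f r k) then (1:ℤ) else -1) * (ps n f (k+1) - ps n f k) := by
  rw [ps_succ, ps_succ]
  by_cases h : k < n
  · simp only [dif_pos h]
    by_cases he : Even (gg n f r k) <;> simp [Phi, he, stp_not] <;> ring
  · simp [dif_neg h]

/-- main invariant: straightened path formula and side condition -/
lemma inv (n : ℕ) (f : Fin n → Bool) (r : ℤ) (hr : 1 ≤ r) (k : ℕ) :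
    (ps n (Phi n r f) k =
      if Even (gg n f r k) then ps n f k + (gg n f r k : ℤ)
      else (gg n f r k : ℤ) - 1 + 2*r - ps n f k) ∧
    (if Even (gg n f r k) then ps n f k ≤ r - 1 else r ≤ ps n f k) := by
  induction k with
  | zero => simp [ps_zero, gg_zero]; omega
  | succ k ih =>
    obtain ⟨ih1, ih2⟩ := ih
    have hstep := step_cases n f k
    have hphi := step_Phi n r f k
    have hgs := gg_succ n f r k
    by_cases hc : ps n f k + ps n f (k+1) = 2*r - 1
    · rw [if_pos hc] at hgs
      have hpar : ¬ Even (gg n f r (k+1)) ↔ Even (gg n f r k) := by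
        rw [hgs]; simp [Nat.even_add_one]
      by_cases he : Even (gg n f r k)
      · rw [if_pos he] at ih1 ih2 hphi
        have h1 : ps n f k = r - 1 ∧ ps n f (k+1) = r := by omega
        have he' : ¬ Even (gg n f r (k+1)) := hpar.mpr he
        rw [if_neg he', if_neg he']
        constructor
        · push_cast [hgs]; omega
        · omega
      · rw [if_neg he] at ih1 ih2 hphi
        have h1 : ps n f k = r ∧ ps n f (k+1) = r - 1 := by omega
        have he' : Even (gg n f r (k+1)) := by
          by_contra hx; exact he (hpar.mp hx)
        rw [if_pos he', if_pos he']
        have hg1 : 1 ≤ gg n f r k := by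
          rcases Nat.eq_zero_or_pos (gg n f r k) with h | h
          · exact absurd (h ▸ Even.zero) he
          · exact h
        constructor
        · push_cast [hgs]; omega
        · omega
    · rw [if_neg hc] at hgs
      have hgeq : gg n f r (k+1) = gg n f r k := by omega
      rw [hgeq]
      by_cases he : Even (gg n f r k)
      · rw [if_pos he] at ih1 ih2 hphi ⊢
        rw [if_pos he]
        constructor
        · omega
        · omega
      · rw [if_neg he] at ih1 ih2 hphi ⊢
        rw [if_neg he]
        constructor
        · omega
        · omega

/-- crossings of the straightened path detect crossings of the original -/
lemma cross_iff (n : ℕ) (f : Fin n → Bool) (r : ℤ) (hr : 1 ≤ r) (k : ℕ) :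
    (ps n (Phi n r f) k + ps n (Phi n r f) (k+1) = 2*(r + (gg n f r k : ℤ)) - 1) ↔
      (ps n f k + ps n f (k+1) = 2*r - 1) := by
  have h1 := (inv n f r hr k).1
  have h2 := (inv n f r hr (k+1)).1
  have hside := (inv n f r hr k).2
  have hstep := step_cases n f k
  have hgs := gg_succ n f r k
  by_cases hc : ps n f k + ps n f (k+1) = 2*r - 1
  · rw [if_pos hc] at hgs
    simp only [hc, iff_true]
    by_cases he : Even (gg n f r k)
    · rw [if_pos he] at h1 hside
      have he' : ¬ Even (gg n f r (k+1)) := by rw [hgs]; simpa [Nat.even_add_one]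
      rw [if_neg he'] at h2
      push_cast [hgs] at h2 ⊢; omega
    · rw [if_neg he] at h1 hside
      have he' : Even (gg n f r (k+1)) := by
        rw [hgs]; simpa [Nat.even_add_one] using he
      rw [if_pos he'] at h2
      push_cast [hgs] at h2 ⊢; omega
  · rw [if_neg hc] at hgs
    have hgeq : gg n f r (k+1) = gg n f r k := by omega
    rw [hgeq] at h2
    simp only [hc, iff_false]
    by_cases he : Even (gg n f r k)
    · rw [if_pos he] at h1 h2 hside; omega
    · rw [if_neg he] at h1 h2 hside; omega

/-- crossing counter recoverable from a path -/
def hh (n : ℕ) (w : Fin n → Bool) (r : ℤ) : ℕ → ℕ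
  | 0 => 0
  | k+1 => hh n w r k +
      if ps n w k + ps n w (k+1) = 2*(r + (hh n w r k : ℤ)) - 1 then 1 else 0

lemma hh_Phi (n : ℕ) (f : Fin n → Bool) (r : ℤ) (hr : 1 ≤ r) (k : ℕ) :
    hh n (Phi n r f) r k = gg n f r k := by
  induction k with
  | zero => simp [hh, gg_zero]
  | succ k ih =>
    rw [hh, ih, gg_succ]
    congr 1
    by_cases hc : ps n f k + ps n f (k+1) = 2*r - 1
    · rw [if_pos hc, if_pos ((cross_iff n f r hr k).mpr hc)]
    · rw [if_neg hc, if_neg (fun h => hc ((cross_iff n f r hr k).mp h))]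

/-- inverse of the straightening map -/
def Psi (n : ℕ) (r : ℤ) (w : Fin n → Bool) : Fin n → Bool :=
  fun i => if Even (hh n w r i.val) then w i else !(w i)

lemma Psi_Phi (n : ℕ) (r : ℤ) (hr : 1 ≤ r) (f : Fin n → Bool) :
    Psi n r (Phi n r f) = f := by
  funext i
  simp only [Psi, hh_Phi n f r hr, Phi]
  by_cases he : Even (gg n f r i.val) <;> simp [he]

lemma exists_step (n : ℕ) (f : Fin n → Bool) (r : ℤ) (m : ℕ) (hm : 1 ≤ m) :
    ∀ k, m ≤ gg n f r k →
      ∃ j, j < k ∧ gg n f r j = m - 1 ∧ ps n f j + ps n f (j+1) = 2*r - 1 := by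
  intro k
  induction k with
  | zero => rw [gg_zero]; omega
  | succ k ih =>
    intro hk
    have hgs := gg_succ n f r k
    by_cases h : m ≤ gg n f r k
    · obtain ⟨j, hj⟩ := ih h
      exact ⟨j, by omega, hj.2⟩
    · have hcx : ps n f k + ps n f (k+1) = 2*r - 1 := by
        by_contra hc; rw [if_neg hc] at hgs; omega
      rw [if_pos hcx] at hgs
      exact ⟨k, by omega, by omega, hcx⟩

/-- the straightened path reaches height `r + m - 1 ≥ m` -/
lemma height (n : ℕ) (f : Fin n → Bool) (r : ℤ) (hr : 1 ≤ r) (m : ℕ) (hm : 1 ≤ m)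
    (h : m ≤ gg n f r n) : ∃ k ≤ n, (m : ℤ) ≤ ps n (Phi n r f) k := by
  obtain ⟨j, hjn, hgj, hc⟩ := exists_step n f r m hm n h
  refine ⟨j + 1, by omega, ?_⟩
  have h1 := (inv n f r hr (j+1)).1
  have hside := (inv n f r hr j).2
  have hstep := step_cases n f j
  have hgs := gg_succ n f r j
  rw [if_pos hc] at hgs
  by_cases he : Even (gg n f r j)
  · rw [if_pos he] at hside
    have he' : ¬ Even (gg n f r (j+1)) := by rw [hgs]; simpa [Nat.even_add_one]
    rw [if_neg he'] at h1
    push_cast [hgs, hgj] at h1 ⊢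
    omega
  · rw [if_neg he] at hside
    have he' : Even (gg n f r (j+1)) := by rw [hgs]; simpa [Nat.even_add_one] using he
    rw [if_pos he'] at h1
    push_cast [hgs, hgj] at h1 ⊢
    omega

/-- first hitting time of level `M` -/
noncomputable def hit (n : ℕ) (w : Fin n → Bool) (M : ℤ) : ℕ :=
  sInf {k | M ≤ ps n w k}

section Refl
variable {n : ℕ} {w : Fin n → Bool} {M : ℤ}

/-- reflection of the path after the hitting time -/
noncomputable def refl (n : ℕ) (w : Fin n → Bool) (M : ℤ) : Fin n → Bool :=
  fun i => if i.val < hit n w M then w i else !(w i)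

variable (hM : 1 ≤ M) (H : ∃ k, k ≤ n ∧ M ≤ ps n w k)

include H in
lemma hit_le : hit n w M ≤ n := by
  obtain ⟨k, hk, hpk⟩ := H
  exact le_trans (Nat.sInf_le hpk) hk

include H in
lemma ps_hit_ge : M ≤ ps n w (hit n w M) := by
  obtain ⟨k, hk, hpk⟩ := H
  exact Nat.sInf_mem (⟨k, hpk⟩ : {k | M ≤ ps n w k}.Nonempty)

lemma ps_lt_of_lt_hit {j : ℕ} (hj : j < hit n w M) : ps n w j < M := by
  have := Nat.notMem_of_lt_sInf hj
  simpa [Set.mem_setOf_eq, not_le] using this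

include hM H in
lemma ps_hit : ps n w (hit n w M) = M := by
  have h1 := ps_hit_ge H
  have hpos : 1 ≤ hit n w M := by
    rcases Nat.eq_zero_or_pos (hit n w M) with h | h
    · rw [h, ps_zero] at h1; omega
    · exact h
  have h2 := ps_lt_of_lt_hit (n := n) (w := w) (M := M) (j := hit n w M - 1) (by omega)
  have h3 := step_cases n w (hit n w M - 1)
  have he : hit n w M - 1 + 1 = hit n w M := by omega
  rw [he] at h3
  omega

include hM H in
lemma ps_refl (k : ℕ) :
    ps n (refl n w M) k = if k ≤ hit n w M then ps n w k else 2*M - ps n w k := by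
  induction k with
  | zero => simp [ps_zero]
  | succ k ih =>
    have hstep : ps n (refl n w M) (k+1) - ps n (refl n w M) k =
        (if k < hit n w M then (1:ℤ) else -1) * (ps n w (k+1) - ps n w k) := by
      rw [ps_succ, ps_succ]
      by_cases h : k < n
      · simp only [dif_pos h]
        by_cases hk : k < hit n w M <;> simp [refl, hk, stp_not] <;> ring
      · simp [dif_neg h]
    by_cases hk1 : k + 1 ≤ hit n w M
    · rw [if_pos hk1]
      rw [if_pos (by omega : k ≤ hit n w M)] at ih
      rw [if_pos (by omega : k < hit n w M)] at hstep
      omega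
    · rw [if_neg hk1]
      by_cases hk : k ≤ hit n w M
      · have hke : k = hit n w M := by omega
        rw [if_pos hk] at ih
        rw [if_neg (by omega)] at hstep
        have := ps_hit hM H
        rw [hke] at ih hstep ⊢
        omega
      · rw [if_neg hk] at ih
        rw [if_neg (by omega)] at hstep
        omega

include hM H in
lemma hit_refl : hit n (refl n w M) M = hit n w M := by
  apply le_antisymm
  · apply Nat.sInf_le
    have := ps_refl hM H (hit n w M)
    rw [if_pos le_rfl] at this
    simpa [Set.mem_setOf_eq, this] using ps_hit_ge H
  · by_contra hlt
    push_neg at hlt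
    have hne : {k | M ≤ ps n (refl n w M) k}.Nonempty := by
      refine ⟨hit n w M, ?_⟩
      have := ps_refl hM H (hit n w M)
      rw [if_pos le_rfl] at this
      simpa [Set.mem_setOf_eq, this] using ps_hit_ge H
    have hmem : M ≤ ps n (refl n w M) (hit n (refl n w M) M) := Nat.sInf_mem hne
    have heq := ps_refl hM H (hit n (refl n w M) M)
    rw [if_pos (by omega)] at heq
    rw [heq] at hmem
    exact absurd hmem (not_le.mpr (ps_lt_of_lt_hit hlt))

include hM H in
lemma refl_refl : refl n (refl n w M) M = w := by
  funext i
  simp only [refl, hit_refl hM H]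
  by_cases h : i.val < hit n w M <;> simp [h]

include hM H in
lemma ps_refl_final (hn : ps n w n < M) : M ≤ ps n (refl n w M) n := by
  have hle := hit_le H
  have hne : hit n w M ≠ n := by
    intro he
    have h2 := ps_hit_ge H
    rw [he] at h2
    exact absurd h2 (not_le.mpr hn)
  have := ps_refl hM H n
  rw [if_neg (by omega)] at this
  omega

end Refl

section Counting
variable (n : ℕ) (m : ℕ) (r : ℤ)

/-- paths whose final value is at least `m` -/
def Fplus : Finset (Fin n → Bool) := Finset.univ.filter (fun w => (m : ℤ) ≤ ps n w n)

/-- paths crossing edge `r` at least `m` times -/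
def Er : Finset (Fin n → Bool) := Finset.univ.filter (fun f => m ≤ gg n f r n)

lemma card_Er_le (hr : 1 ≤ r) (hm : 1 ≤ m) :
    (Er n m r).card ≤ 2 * (Fplus n m).card := by
  classical
  have key : (Er n m r).card ≤ ((Fplus n m) ×ˢ (Finset.univ : Finset Bool)).card := by
    apply Finset.card_le_card_of_injOn
      (fun f => if (m : ℤ) ≤ ps n (Phi n r f) n then (Phi n r f, false)
        else (refl n (Phi n r f) m, true))
    · intro f hf
      simp only [Er, Finset.mem_coe, Finset.mem_filter, Finset.mem_univ, true_and] at hf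
      have hH : ∃ k, k ≤ n ∧ (m:ℤ) ≤ ps n (Phi n r f) k := by
        obtain ⟨k, hk, hp⟩ := height n f r hr m hm hf
        exact ⟨k, hk, hp⟩
      by_cases hc : (m : ℤ) ≤ ps n (Phi n r f) n
      · simp only [if_pos hc, Finset.mem_coe, Finset.mem_product, Finset.mem_univ, and_true]
        simp only [Fplus, Finset.mem_filter, Finset.mem_univ, true_and]
        exact hc
      · simp only [if_neg hc, Finset.mem_coe, Finset.mem_product, Finset.mem_univ, and_true]
        simp only [Fplus, Finset.mem_filter, Finset.mem_univ, true_and]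
        exact ps_refl_final (by exact_mod_cast hm) hH (by omega)
    · intro f1 hf1 f2 hf2 heq
      simp only [Er, Finset.coe_filter, Set.mem_setOf_eq] at hf1 hf2
      have hH1 : ∃ k, k ≤ n ∧ (m:ℤ) ≤ ps n (Phi n r f1) k := by
        obtain ⟨k, hk, hp⟩ := height n f1 r hr m hm hf1.2
        exact ⟨k, hk, hp⟩
      have hH2 : ∃ k, k ≤ n ∧ (m:ℤ) ≤ ps n (Phi n r f2) k := by
        obtain ⟨k, hk, hp⟩ := height n f2 r hr m hm hf2.2
        exact ⟨k, hk, hp⟩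
      have hm' : (1:ℤ) ≤ (m:ℤ) := by exact_mod_cast hm
      simp only at heq
      by_cases h1 : (m : ℤ) ≤ ps n (Phi n r f1) n <;>
        by_cases h2 : (m : ℤ) ≤ ps n (Phi n r f2) n
      · rw [if_pos h1, if_pos h2] at heq
        have : Phi n r f1 = Phi n r f2 := (Prod.mk.injEq _ _ _ _ ▸ heq).1
        calc f1 = Psi n r (Phi n r f1) := (Psi_Phi n r hr f1).symm
          _ = Psi n r (Phi n r f2) := by rw [this]
          _ = f2 := Psi_Phi n r hr f2
      · rw [if_pos h1, if_neg h2] at heq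
        exact absurd (Prod.mk.injEq _ _ _ _ ▸ heq).2 (by simp)
      · rw [if_neg h1, if_pos h2] at heq
        exact absurd (Prod.mk.injEq _ _ _ _ ▸ heq).2 (by simp)
      · rw [if_neg h1, if_neg h2] at heq
        have hre : refl n (Phi n r f1) m = refl n (Phi n r f2) m :=
          (Prod.mk.injEq _ _ _ _ ▸ heq).1
        have : Phi n r f1 = Phi n r f2 := by
          calc Phi n r f1 = refl n (refl n (Phi n r f1) m) m :=
                (refl_refl hm' hH1).symm
            _ = refl n (refl n (Phi n r f2) m) m := by rw [hre]
            _ = Phi n r f2 := refl_refl hm' hH2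
        calc f1 = Psi n r (Phi n r f1) := (Psi_Phi n r hr f1).symm
          _ = Psi n r (Phi n r f2) := by rw [this]
          _ = f2 := Psi_Phi n r hr f2
  rw [Finset.card_product] at key
  simpa [mul_comm] using key

/-- negation reduces negative edges to positive ones -/
def nneg (f : Fin n → Bool) : Fin n → Bool := fun i => !(f i)

lemma ps_nneg (f : Fin n → Bool) (k : ℕ) : ps n (nneg n f) k = - ps n f k := by
  induction k with
  | zero => simp [ps_zero]
  | succ k ih =>
    rw [ps_succ, ps_succ, ih]
    by_cases h : k < n
    · simp [h, nneg, stp_not]; omega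
    · simp [h]

lemma gg_nneg (f : Fin n → Bool) (k : ℕ) : gg n (nneg n f) (1 - r) k = gg n f r k := by
  unfold gg
  congr 1
  apply Finset.filter_congr
  intro j _
  rw [ps_nneg, ps_nneg]
  constructor <;> intro h <;> omega

lemma card_Er_le_neg (hr : r ≤ 0) (hm : 1 ≤ m) :
    (Er n m r).card ≤ 2 * (Fplus n m).card := by
  classical
  have step1 : (Er n m r).card ≤ (Er n m (1 - r)).card := by
    apply Finset.card_le_card_of_injOn (nneg n)
    · intro f hf
      simp only [Er, Finset.mem_coe, Finset.mem_filter, Finset.mem_univ, true_and] at hf ⊢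
      rw [gg_nneg]
      exact hf
    · intro f1 _ f2 _ heq
      funext i
      have := congrFun heq i
      simp only [nneg] at this
      exact Bool.not_inj this
  exact le_trans step1 (card_Er_le n m (1 - r) (by omega) hm)

end Counting

section Main
variable (n m : ℕ)

/-- edges with a crossing lie in the window -/
lemma edge_range (f : Fin n → Bool) (r : ℤ) (hm : 1 ≤ m) (h : m ≤ gg n f r n) :
    r ∈ Finset.Icc (1 - (n:ℤ)) (n:ℤ) := by
  obtain ⟨j, hj, _, hc⟩ := exists_step n f r 1 le_rfl n (le_trans hm h)
  have b1 := ps_bounds n f j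
  have b2 := ps_bounds n f (j+1)
  simp only [Finset.mem_Icc]
  have h1 : (min j n : ℤ) ≤ n := by push_cast; omega
  have h2 : (min (j+1) n : ℤ) ≤ n := by push_cast; omega
  omega

open scoped Classical in
/-- the bad event as a finite set of sign sequences -/
noncomputable def EF : Finset (Fin n → Bool) :=
  Finset.univ.filter (fun f => ∃ r ∈ Finset.Icc (1 - (n:ℤ)) (n:ℤ), m ≤ gg n f r n)

lemma card_EF_le (hm : 1 ≤ m) :
    (EF n m).card ≤ 4 * n * (Fplus n m).card := by
  classical
  have hsub : EF n m ⊆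
      (Finset.Icc (1 - (n:ℤ)) (n:ℤ)).biUnion (fun r => Er n m r) := by
    intro f hf
    simp only [EF, Finset.mem_filter, Finset.mem_univ, true_and] at hf
    obtain ⟨r, hr, hgr⟩ := hf
    simp only [Finset.mem_biUnion]
    exact ⟨r, hr, by simp only [Er, Finset.mem_filter, Finset.mem_univ, true_and]; exact hgr⟩
  calc (EF n m).card ≤ _ := Finset.card_le_card hsub
    _ ≤ ∑ r ∈ Finset.Icc (1 - (n:ℤ)) (n:ℤ), (Er n m r).card := Finset.card_biUnion_le
    _ ≤ ∑ _r ∈ Finset.Icc (1 - (n:ℤ)) (n:ℤ), 2 * (Fplus n m).card := by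
        apply Finset.sum_le_sum
        intro r _
        by_cases hr : 1 ≤ r
        · exact card_Er_le n m r hr hm
        · exact card_Er_le_neg n m r (by omega) hm
    _ = (Finset.Icc (1 - (n:ℤ)) (n:ℤ)).card * (2 * (Fplus n m).card) := by
        rw [Finset.sum_const, smul_eq_mul]
    _ = 4 * n * (Fplus n m).card := by
        rw [Int.card_Icc]
        have : ((n:ℤ) + 1 - (1 - (n:ℤ))).toNat = 2 * n := by omega
        rw [this]; ring

lemma ps_eq_sum_fin (f : Fin n → Bool) : ps n f n = ∑ i : Fin n, stp (f i) := by
  rw [ps, ← Fin.sum_univ_eq_sum_range (fun i => if h : i < n then stp (f ⟨i, h⟩) else 0) n]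
  exact Finset.sum_congr rfl (fun i _ => by simp [i.isLt])

/-- Chernoff bound on the count of paths ending above `m` -/
lemma card_Fplus_le (hn : 1 ≤ n) (hm : 1 ≤ m) :
    ((Fplus n m).card : ℝ) ≤ 2 ^ n * Real.exp (-(m:ℝ)^2 / (2*n)) := by
  classical
  set lam : ℝ := (m : ℝ) / n with hlam
  have hn0 : (0:ℝ) < n := by exact_mod_cast hn
  have hlampos : 0 < lam := by positivity
  have key1 : ((Fplus n m).card : ℝ) * Real.exp (lam * m) ≤
      ∑ f : Fin n → Bool, Real.exp (lam * (ps n f n : ℝ)) := by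
    have h1 : ((Fplus n m).card : ℝ) * Real.exp (lam * m) =
        ∑ _f ∈ Fplus n m, Real.exp (lam * m) := by
      rw [Finset.sum_const, nsmul_eq_mul]
    rw [h1]
    apply le_trans (Finset.sum_le_sum (fun f hf => ?_))
      (Finset.sum_le_sum_of_subset_of_nonneg (Finset.filter_subset _ _)
        (fun _ _ _ => (Real.exp_pos _).le))
    simp only [Fplus, Finset.mem_filter, Finset.mem_univ, true_and] at hf
    apply Real.exp_le_exp.mpr
    apply mul_le_mul_of_nonneg_left _ hlampos.le
    exact_mod_cast hf
  have key2 : ∑ f : Fin n → Bool, Real.exp (lam * (ps n f n : ℝ)) =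
      (Real.exp lam + Real.exp (-lam)) ^ n := by
    have h1 : ∀ f : Fin n → Bool, Real.exp (lam * (ps n f n : ℝ)) =
        ∏ i : Fin n, Real.exp (lam * (stp (f i) : ℝ)) := by
      intro f
      rw [← Real.exp_sum, ps_eq_sum_fin]
      push_cast
      rw [Finset.mul_sum]
    simp only [h1]
    have h2 := Finset.prod_univ_sum (fun _ : Fin n => (Finset.univ : Finset Bool))
      (fun i b => Real.exp (lam * (stp b : ℝ)))
    rw [Fintype.piFinset_univ] at h2
    rw [← h2]
    have h3 : ∀ i : Fin n, ∑ b : Bool, Real.exp (lam * (stp b : ℝ)) =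
        Real.exp lam + Real.exp (-lam) := by
      intro i
      simp [stp, Fintype.sum_bool, mul_comm]
    rw [Finset.prod_congr rfl (fun i _ => h3 i), Finset.prod_const, Finset.card_univ,
      Fintype.card_fin]
  have key3 : (Real.exp lam + Real.exp (-lam)) ^ n ≤
      (2 * Real.exp (lam^2/2)) ^ n := by
    apply pow_le_pow_left₀ (by positivity)
    have := Real.cosh_le_exp_half_sq lam
    rw [Real.cosh_eq] at this
    linarith
  have hfin : ((Fplus n m).card : ℝ) * Real.exp (lam * m) ≤
      2 ^ n * Real.exp (n * lam^2/2) := by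
    calc ((Fplus n m).card : ℝ) * Real.exp (lam * m) ≤ _ := key1
      _ = (Real.exp lam + Real.exp (-lam)) ^ n := key2
      _ ≤ (2 * Real.exp (lam^2/2)) ^ n := key3
      _ = 2 ^ n * Real.exp (n * lam^2/2) := by
          rw [mul_pow, ← Real.exp_nat_mul]
          ring_nf
  have hexp : Real.exp (n * lam^2/2) / Real.exp (lam * m) =
      Real.exp (-(m:ℝ)^2/(2*n)) := by
    rw [← Real.exp_sub]
    congr 1
    rw [hlam]
    field_simp
    ring
  have hepos : 0 < Real.exp (lam * m) := Real.exp_pos _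
  rw [← hexp]
  rw [div_eq_mul_inv, ← mul_assoc]
  rw [← le_div_iff₀ hepos] at hfin
  calc ((Fplus n m).card : ℝ) ≤ 2 ^ n * Real.exp (n * lam^2/2) / Real.exp (lam * m) := hfin
    _ = 2 ^ n * Real.exp (n * lam^2/2) * (Real.exp (lam * m))⁻¹ := by
        rw [div_eq_mul_inv]

/-- final combinatorial bound -/
lemma card_EF_bound (hn : 1 ≤ n) (hm : 1 ≤ m) :
    ((EF n m).card : ℝ) ≤ 4 * n * 2 ^ n * Real.exp (-(m:ℝ)^2 / (2*n)) := by
  have h1 := card_EF_le n m hm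
  have h2 := card_Fplus_le n m hn hm
  have h3 : ((EF n m).card : ℝ) ≤ 4 * n * ((Fplus n m).card : ℝ) := by
    exact_mod_cast h1
  calc ((EF n m).card : ℝ) ≤ 4 * n * ((Fplus n m).card : ℝ) := h3
    _ ≤ 4 * n * (2 ^ n * Real.exp (-(m:ℝ)^2 / (2*n))) := by
        apply mul_le_mul_of_nonneg_left h2 (by positivity)
    _ = 4 * n * 2 ^ n * Real.exp (-(m:ℝ)^2 / (2*n)) := by ring

end Main

lemma step_pm (n : ℕ) (f : Fin n → Bool) (k : ℕ) (h : k < n) :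
    ps n f (k+1) - ps n f k = 1 ∨ ps n f (k+1) - ps n f k = -1 := by
  rw [ps_succ, dif_pos h]
  rcases stp_one_or (f ⟨k, h⟩) with h1 | h1 <;> simp [h1]

lemma sum_Icc_one {M : Type*} [AddCommMonoid M] (n : ℕ) (g : ℕ → M) :
    ∑ k ∈ Finset.Icc 1 n, g k = ∑ i ∈ Finset.range n, g (i+1) := by
  induction n with
  | zero => simp
  | succ n ih => rw [Finset.sum_Icc_succ_top (by omega), ih, Finset.sum_range_succ]

open MeasureTheory ProbabilityTheory

section Omega
variable {Ω : Type*} [MeasurableSpace Ω] (P : Measure Ω) [IsProbabilityMeasure P]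
    (V : ℕ → Ω → ℤ)

lemma sign_prob (hVmeas : ∀ n, Measurable (V n))
    (hVval : ∀ n ω, V n ω = 1 ∨ V n ω = -1)
    (hVfair : ∀ n, P {ω | V n ω = 1} = 1 / 2) (k : ℕ) (b : Bool) :
    P {ω | V k ω = stp b} = 1 / 2 := by
  cases b
  · have hset : {ω | V k ω = stp false} = {ω | V k ω = 1}ᶜ := by
      ext ω
      simp only [stp, Bool.false_eq_true, if_false, Set.mem_setOf_eq, Set.mem_compl_iff]
      rcases hVval k ω with h | h <;> simp [h]
    rw [hset]
    have hmeas : MeasurableSet {ω | V k ω = 1} :=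
      hVmeas k (measurableSet_singleton 1)
    rw [prob_compl_eq_one_sub hmeas, hVfair k]
    rw [ENNReal.eq_div_iff (by norm_num) (by norm_num)]
    rw [ENNReal.mul_sub (by intros; norm_num)]
    have h12 : (2:ENNReal) * (1/2) = 1 := by
      rw [mul_comm]
      exact ENNReal.div_mul_cancel (by norm_num) (by norm_num)
    rw [h12, mul_one]
    exact ENNReal.sub_eq_of_eq_add (by norm_num) (by rw [one_add_one_eq_two])
  · simpa [stp] using hVfair k

lemma atom_prob (hVmeas : ∀ n, Measurable (V n))
    (hVval : ∀ n ω, V n ω = 1 ∨ V n ω = -1)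
    (hVfair : ∀ n, P {ω | V n ω = 1} = 1 / 2)
    (hVindep : iIndepFun V P)
    (n : ℕ) (f : Fin n → Bool) :
    P (⋂ i : Fin n, {ω | V (i.val + 1) ω = stp (f i)}) = (1/2 : ENNReal) ^ n := by
  classical
  set s : ℕ → Set Ω := fun k =>
    if h : 1 ≤ k ∧ k - 1 < n then {ω | V k ω = stp (f ⟨k - 1, h.2⟩)} else Set.univ with hs
  have hset : (⋂ i : Fin n, {ω | V (i.val + 1) ω = stp (f i)}) = ⋂ k ∈ Finset.Icc 1 n, s k := by
    ext ω
    simp only [Set.mem_iInter, Finset.mem_Icc, Set.mem_setOf_eq]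
    constructor
    · intro h k hk
      have hcond : 1 ≤ k ∧ k - 1 < n := ⟨hk.1, by omega⟩
      rw [hs]
      simp only [dif_pos hcond]
      have h2 := h ⟨k - 1, hcond.2⟩
      have he : k - 1 + 1 = k := by omega
      rw [he] at h2
      exact h2
    · intro h i
      have hk : 1 ≤ i.val + 1 ∧ i.val + 1 ≤ n := ⟨by omega, by omega⟩
      have h2 := h (i.val + 1) hk
      have hcond : 1 ≤ i.val + 1 ∧ i.val + 1 - 1 < n := ⟨by omega, by simpa using i.isLt⟩
      rw [hs] at h2
      simp only [dif_pos hcond] at h2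
      simpa using h2
  rw [hset]
  rw [hVindep.meas_biInter (S := Finset.Icc 1 n)
    (fun k hk => ?_)]
  · have hprod : ∀ k ∈ Finset.Icc 1 n, P (s k) = 1/2 := by
      intro k hk
      simp only [Finset.mem_Icc] at hk
      have hcond : 1 ≤ k ∧ k - 1 < n := ⟨hk.1, by omega⟩
      rw [hs]
      simp only [dif_pos hcond]
      exact sign_prob P V hVmeas hVval hVfair k _
    rw [Finset.prod_congr rfl hprod, Finset.prod_const, Nat.card_Icc]
    norm_num
  · simp only [Finset.mem_Icc] at hk
    have hcond : 1 ≤ k ∧ k - 1 < n := ⟨hk.1, by omega⟩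
    refine ⟨{stp (f ⟨k - 1, hcond.2⟩)}, measurableSet_singleton _, ?_⟩
    rw [hs]
    simp only [dif_pos hcond]
    rfl

end Omega

section Corr
variable {Ω : Type*} (V : ℕ → Ω → ℤ)
    (S : ℕ → Ω → ℤ) (hS : ∀ n ω, S n ω = ∑ k ∈ Finset.Icc 1 n, V k ω)
    (R : ℕ → Ω → ℤ) (hR : ∀ n ω, R n ω = (1 + S (n - 1) ω + S n ω) / 2)
    (U : ℕ → ℤ → Ω → ℕ)
    (hU : ∀ n r ω, U n r ω = ∑ k ∈ Finset.Icc 1 n, if R k ω = r then 1 else 0)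

include hS in
lemma S_eq_ps (n : ℕ) (ω : Ω) (f : Fin n → Bool)
    (hωf : ∀ i : Fin n, V (i.val + 1) ω = stp (f i)) :
    ∀ k, k ≤ n → S k ω = ps n f k := by
  intro k hk
  rw [hS, ps, sum_Icc_one]
  apply Finset.sum_congr rfl
  intro i hi
  have hin : i < n := lt_of_lt_of_le (Finset.mem_range.mp hi) hk
  rw [dif_pos hin]
  exact hωf ⟨i, hin⟩

include hS hR hU in
lemma U_eq_gg (n : ℕ) (ω : Ω) (f : Fin n → Bool)
    (hωf : ∀ i : Fin n, V (i.val + 1) ω = stp (f i)) (r : ℤ) :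
    U n r ω = gg n f r n := by
  classical
  have hps := S_eq_ps V S hS n ω f hωf
  have hcross : ∀ k, 1 ≤ k → k ≤ n → ((R k ω = r) ↔ (ps n f (k-1) + ps n f k = 2*r - 1)) := by
    intro k h1 h2
    rw [hR, hps (k-1) (by omega), hps k h2]
    have hkn : k - 1 < n := by omega
    have hstep := step_pm n f (k-1) hkn
    have he : k - 1 + 1 = k := by omega
    rw [he] at hstep
    omega
  rw [hU, gg, Finset.card_filter, sum_Icc_one]
  apply Finset.sum_congr rfl
  intro i hi
  have hin : i < n := Finset.mem_range.mp hi
  have hiff := hcross (i+1) (by omega) (by omega)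
  simp only [Nat.add_sub_cancel] at hiff
  exact if_congr hiff rfl rfl

end Corr

end SWalk


open MeasureTheory ProbabilityTheory

/-- Maximal inequality for edge local times of the simple symmetric random walk:
`P[max_r U_{n,r} > L] ≤ 4n·exp(-L²/(2n))`. -/
theorem stmt6
    {Ω : Type*} [MeasurableSpace Ω] (P : Measure Ω) [IsProbabilityMeasure P]
    (V : ℕ → Ω → ℤ)
    (hVmeas : ∀ n, Measurable (V n))
    (hVval : ∀ n ω, V n ω = 1 ∨ V n ω = -1)
    (hVfair : ∀ n, P {ω | V n ω = 1} = 1 / 2)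
    (hVindep : iIndepFun V P)
    (S : ℕ → Ω → ℤ) (hS : ∀ n ω, S n ω = ∑ k ∈ Finset.Icc 1 n, V k ω)
    (R : ℕ → Ω → ℤ) (hR : ∀ n ω, R n ω = (1 + S (n - 1) ω + S n ω) / 2)
    (U : ℕ → ℤ → Ω → ℕ)
    (hU : ∀ n r ω, U n r ω = ∑ k ∈ Finset.Icc 1 n, if R k ω = r then 1 else 0) :
    ∀ n : ℕ, 1 ≤ n → ∀ L : ℝ, 0 < L →
      P {ω | ∃ r : ℤ, L < (U n r ω : ℝ)} ≤
        ENNReal.ofReal (4 * n * Real.exp (-L ^ 2 / (2 * n))) := by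
  intro n hn L hL
  classical
  set m : ℕ := Nat.floor L + 1 with hmdef
  have hm1 : 1 ≤ m := by omega
  set sig : Ω → (Fin n → Bool) := fun ω i => decide (V (i.val + 1) ω = 1) with hsig
  have hsigv : ∀ ω (i : Fin n), V (i.val + 1) ω = SWalk.stp (sig ω i) := by
    intro ω i
    rcases hVval (i.val + 1) ω with h | h <;> simp [hsig, h, SWalk.stp]
  set atom : (Fin n → Bool) → Set Ω :=
    fun f => ⋂ i : Fin n, {ω | V (i.val + 1) ω = SWalk.stp (f i)} with hatom
  have hmem : ∀ ω f, ω ∈ atom f ↔ f = sig ω := by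
    intro ω f
    simp only [hatom, Set.mem_iInter, Set.mem_setOf_eq]
    constructor
    · intro h
      funext i
      exact SWalk.stp_inj ((h i).symm.trans (hsigv ω i))
    · intro h i
      rw [h]
      exact hsigv ω i
  have hUg : ∀ ω r, U n r ω = SWalk.gg n (sig ω) r n := fun ω r =>
    SWalk.U_eq_gg V S hS R hR U hU n ω (sig ω) (fun i => hsigv ω i) r
  have hLU : ∀ u : ℕ, (L < (u : ℝ)) ↔ m ≤ u := by
    intro u
    rw [← Nat.floor_lt hL.le]
    omega
  have hevent : {ω | ∃ r : ℤ, L < (U n r ω : ℝ)} = ⋃ f ∈ SWalk.EF n m, atom f := by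
    ext ω
    simp only [Set.mem_setOf_eq, Set.mem_iUnion, exists_prop]
    constructor
    · rintro ⟨r, hr⟩
      refine ⟨sig ω, ?_, (hmem ω (sig ω)).mpr rfl⟩
      have hmU : m ≤ SWalk.gg n (sig ω) r n := by
        rw [← hUg ω r]; exact (hLU _).mp hr
      simp only [SWalk.EF, Finset.mem_filter, Finset.mem_univ, true_and]
      exact ⟨r, SWalk.edge_range n m (sig ω) r hm1 hmU, hmU⟩
    · rintro ⟨f, hf, hωf⟩
      have hfe : f = sig ω := (hmem ω f).mp hωf
      simp only [SWalk.EF, Finset.mem_filter, Finset.mem_univ, true_and] at hf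
      obtain ⟨r, _, hgr⟩ := hf
      refine ⟨r, (hLU _).mpr ?_⟩
      rw [hUg ω r, ← hfe]
      exact hgr
  have hdisj : (↑(SWalk.EF n m) : Set (Fin n → Bool)).PairwiseDisjoint atom := by
    intro f1 _ f2 _ hne
    refine Set.disjoint_left.mpr (fun ω h1 h2 => hne ?_)
    rw [(hmem ω f1).mp h1, (hmem ω f2).mp h2]
  have hmeasatom : ∀ f ∈ SWalk.EF n m, MeasurableSet (atom f) := by
    intro f _
    exact MeasurableSet.iInter
      (fun i => hVmeas (i.val + 1) (measurableSet_singleton (SWalk.stp (f i))))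
  rw [hevent, measure_biUnion_finset hdisj hmeasatom]
  have hatomP : ∀ f ∈ SWalk.EF n m, P (atom f) = (1/2 : ENNReal) ^ n := fun f _ =>
    SWalk.atom_prob P V hVmeas hVval hVfair hVindep n f
  rw [Finset.sum_congr rfl hatomP, Finset.sum_const, nsmul_eq_mul]
  have hn0 : (0:ℝ) < n := by exact_mod_cast hn
  have hreal : ((SWalk.EF n m).card : ℝ) * (1/2)^n ≤ 4 * n * Real.exp (-L^2 / (2*n)) := by
    have h1 := SWalk.card_EF_bound n m hn hm1
    have hLm : L ≤ (m : ℝ) := by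
      have h2 := Nat.lt_floor_add_one L
      have h3 : ((m:ℕ) : ℝ) = (Nat.floor L : ℝ) + 1 := by rw [hmdef]; push_cast; ring
      rw [h3]
      linarith
    have hexp : Real.exp (-(m:ℝ)^2/(2*n)) ≤ Real.exp (-L^2/(2*n)) := by
      apply Real.exp_le_exp.mpr
      have h2 : L^2 ≤ (m:ℝ)^2 := by nlinarith
      have h2n : (0:ℝ) < 2*n := by positivity
      exact (div_le_div_iff_of_pos_right h2n).mpr (by linarith)
    have hpow : (2:ℝ)^n * (1/2)^n = 1 := by
      rw [← mul_pow]
      norm_num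
    calc ((SWalk.EF n m).card : ℝ) * (1/2)^n
        ≤ (4 * n * 2^n * Real.exp (-(m:ℝ)^2 / (2*n))) * (1/2)^n := by
          apply mul_le_mul_of_nonneg_right h1 (by positivity)
      _ = 4 * n * Real.exp (-(m:ℝ)^2 / (2*n)) * ((2:ℝ)^n * (1/2)^n) := by ring
      _ = 4 * n * Real.exp (-(m:ℝ)^2 / (2*n)) := by rw [hpow, mul_one]
      _ ≤ 4 * n * Real.exp (-L^2 / (2*n)) := by
          apply mul_le_mul_of_nonneg_left hexp (by positivity)
  have hcast : ((SWalk.EF n m).card : ENNReal) * (1/2 : ENNReal)^n =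
      ENNReal.ofReal (((SWalk.EF n m).card : ℝ) * (1/2)^n) := by
    rw [ENNReal.ofReal_mul (p := ((SWalk.EF n m).card : ℝ)) (Nat.cast_nonneg _), ENNReal.ofReal_natCast,
      ENNReal.ofReal_pow (by norm_num)]
    congr 1
    rw [ENNReal.ofReal_div_of_pos (by norm_num), ENNReal.ofReal_one, ENNReal.ofReal_ofNat]
  rw [hcast]
  exact ENNReal.ofReal_le_ofReal hreal
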